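/- Asymptotic central charge of the Virasoro algebra at extremal weight h → 1: for every integer n ≥ 2, λ_n(1) = 4n + 4, the function h ↦ λ_n(h) is differentiable at h = 1, and the derivatives b_n := λ_n'(1) satisfy lim_{n→∞} b_n = 4 = (2/3)·(2³ − 2); moreover the sequence (b_n − 4)_{n≥2} is square-summable. Thus, modulo Hilbert–Schmidt (square-summable diagonal) corrections, for h = 1 + ℏ the first-order term in ℏ of [L₂, L₋₂] beyond its value at ℏ = 0 is 4ℏ·id, which gives the same asymptotic central charge c = 8ℏ as at h → 1/2. -/

import Mathlib

noncomputable section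

/-- The eigenvalue `λₙ(h)` of the commutator `[L₂, L₋₂]` on the monomial `zⁿ` in the Verma
module `V_h`:
`λₙ(h) = (n+3h)²(n+1)(n+2)/((n+2h)(n+2h+1)) − (n+3h−2)²·n·(n−1)/((n+2h−1)(n+2h−2))`. -/
def lam (h : ℝ) (n : ℕ) : ℝ :=
  ((n : ℝ) + 3 * h) ^ 2 * ((n : ℝ) + 1) * ((n : ℝ) + 2) /
      (((n : ℝ) + 2 * h) * ((n : ℝ) + 2 * h + 1)) -
    ((n : ℝ) + 3 * h - 2) ^ 2 * (n : ℝ) * ((n : ℝ) - 1) /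
      (((n : ℝ) + 2 * h - 1) * ((n : ℝ) + 2 * h - 2))

lemma lam_hasDerivAt (n : ℕ) (hn : 2 ≤ n) :
    HasDerivAt (fun h : ℝ => lam h n) (4 - 4 / ((n : ℝ) * ((n : ℝ) + 2))) 1 := by
  have hN : (2 : ℝ) ≤ (n : ℝ) := by exact_mod_cast hn
  have hB : ((n : ℝ) + 2 * 1) * ((n : ℝ) + 2 * 1 + 1) ≠ 0 := by positivity
  have hD : ((n : ℝ) + 2 * 1 - 1) * ((n : ℝ) + 2 * 1 - 2) ≠ 0 := by
    have h1 : (0:ℝ) < (n : ℝ) + 2 * 1 - 1 := by linarith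
    have h2 : (0:ℝ) < (n : ℝ) + 2 * 1 - 2 := by linarith
    positivity
  have hbase : HasDerivAt (fun h : ℝ => (n : ℝ) + 3 * h) 3 1 := by
    simpa using ((hasDerivAt_id (1:ℝ)).const_mul 3).const_add (n:ℝ)
  have hbase2 : HasDerivAt (fun h : ℝ => (n : ℝ) + 2 * h) 2 1 := by
    simpa using ((hasDerivAt_id (1:ℝ)).const_mul 2).const_add (n:ℝ)
  have hA : HasDerivAt (fun h : ℝ => ((n:ℝ) + 3*h)^2 * ((n:ℝ)+1) * ((n:ℝ)+2))
      ((2 * ((n:ℝ) + 3*1) ^ 1 * 3) * ((n:ℝ)+1) * ((n:ℝ)+2)) 1 :=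
    ((hbase.pow 2).mul_const _).mul_const _
  have hBd : HasDerivAt (fun h : ℝ => ((n:ℝ) + 2*h) * ((n:ℝ) + 2*h + 1))
      (2 * ((n:ℝ) + 2*1 + 1) + ((n:ℝ) + 2*1) * 2) 1 :=
    hbase2.mul (hbase2.add_const 1)
  have hC : HasDerivAt (fun h : ℝ => ((n:ℝ) + 3*h - 2)^2 * (n:ℝ) * ((n:ℝ)-1))
      ((2 * ((n:ℝ) + 3*1 - 2) ^ 1 * 3) * (n:ℝ) * ((n:ℝ)-1)) 1 :=
    (((hbase.sub_const 2).pow 2).mul_const _).mul_const _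
  have hDd : HasDerivAt (fun h : ℝ => ((n:ℝ) + 2*h - 1) * ((n:ℝ) + 2*h - 2))
      (2 * ((n:ℝ) + 2*1 - 2) + ((n:ℝ) + 2*1 - 1) * 2) 1 :=
    (hbase2.sub_const 1).mul (hbase2.sub_const 2)
  have := (hA.div hBd hB).sub (hC.div hDd hD)
  refine this.congr_deriv (Eq.symm ?_)
  have h0 : (n : ℝ) ≠ 0 := by linarith
  have h1 : (n : ℝ) + 2 ≠ 0 := by linarith
  have h2 : (n : ℝ) + 3 ≠ 0 := by linarith
  have h3 : (n : ℝ) + 1 ≠ 0 := by linarith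
  have e1 : ((n:ℝ) + 2 * 1) * ((n:ℝ) + 2 * 1 + 1) = ((n:ℝ)+2)*((n:ℝ)+3) := by ring
  have e2 : ((n:ℝ) + 2 * 1 - 1) * ((n:ℝ) + 2 * 1 - 2) = ((n:ℝ)+1)*(n:ℝ) := by ring
  have p1 : (((n:ℝ)+2)*((n:ℝ)+3))^2 ≠ 0 := pow_ne_zero _ (mul_ne_zero h1 h2)
  have p2 : (((n:ℝ)+1)*(n:ℝ))^2 ≠ 0 := pow_ne_zero _ (mul_ne_zero h3 h0)
  have hnn : (n:ℝ) * ((n:ℝ)+2) ≠ 0 := mul_ne_zero h0 h1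
  have l : (4:ℝ) - 4 / ((n:ℝ) * ((n:ℝ)+2)) = (4*((n:ℝ)*((n:ℝ)+2)) - 4)/((n:ℝ)*((n:ℝ)+2)) := by
    rw [eq_div_iff hnn, sub_mul, div_mul_cancel₀ _ hnn]
  rw [e1, e2, l, div_sub_div _ _ p1 p2, div_eq_div_iff hnn (mul_ne_zero p1 p2)]
  ring

lemma deriv_lam (n : ℕ) (hn : 2 ≤ n) :
    deriv (fun h : ℝ => lam h n) 1 = 4 - 4 / ((n : ℝ) * ((n : ℝ) + 2)) :=
  (lam_hasDerivAt n hn).deriv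

/-- asymptotic central charge at `h → 1`: for every `n ≥ 2`,
`λₙ(1) = 4n+4` and `h ↦ λₙ(h)` is differentiable at `1`; the derivatives
`bₙ = λₙ'(1)` tend to `4 = (2/3)(2³−2)` and `(bₙ − 4)_{n≥2}` is square-summable
(a Hilbert–Schmidt diagonal correction), giving the same asymptotic central charge
`c = 8ℏ` as at `h → 1/2`. -/
theorem stmt_19 :
    (∀ n : ℕ, 2 ≤ n →
      lam 1 n = 4 * (n : ℝ) + 4 ∧
      DifferentiableAt ℝ (fun h : ℝ => lam h n) 1) ∧
    Filter.Tendsto (fun n : ℕ => deriv (fun h : ℝ => lam h n) 1)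
      Filter.atTop (nhds 4) ∧
    (4 : ℝ) = 2 / 3 * (2 ^ 3 - 2) ∧
    Summable (fun n : ℕ => (deriv (fun h : ℝ => lam h (n + 2)) 1 - 4) ^ 2) := by
  refine ⟨fun n hn => ?_, ?_, by norm_num, ?_⟩
  · have hN : (2 : ℝ) ≤ (n : ℝ) := by exact_mod_cast hn
    constructor
    · unfold lam
      have h0 : (n : ℝ) ≠ 0 := by linarith
      have h1 : (n : ℝ) + 1 ≠ 0 := by linarith
      have h2 : (n : ℝ) + 2 ≠ 0 := by linarith
      have h3 : (n : ℝ) + 3 ≠ 0 := by linarith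
      have e1 : ((n:ℝ) + 2 * 1) * ((n:ℝ) + 2 * 1 + 1) = ((n:ℝ)+2)*((n:ℝ)+3) := by ring
      have e2 : ((n:ℝ) + 2 * 1 - 1) * ((n:ℝ) + 2 * 1 - 2) = ((n:ℝ)+1)*(n:ℝ) := by ring
      rw [e1, e2, div_sub_div _ _ (mul_ne_zero h2 h3) (mul_ne_zero h1 h0),
        div_eq_iff (mul_ne_zero (mul_ne_zero h2 h3) (mul_ne_zero h1 h0))]
      ring
    · exact (lam_hasDerivAt n hn).differentiableAt
  · have hcong : ∀ᶠ n : ℕ in Filter.atTop,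
        (4 : ℝ) - 4 / ((n : ℝ) * ((n : ℝ) + 2)) = deriv (fun h : ℝ => lam h n) 1 := by
      filter_upwards [Filter.eventually_ge_atTop 2] with n hn
      exact (deriv_lam n hn).symm
    refine Filter.Tendsto.congr' hcong ?_
    have h1 : Filter.Tendsto (fun n : ℕ => (n : ℝ) * ((n : ℝ) + 2)) Filter.atTop Filter.atTop := by
      apply Filter.tendsto_atTop_mono (fun n => ?_) tendsto_natCast_atTop_atTop
      nlinarith [Nat.cast_nonneg (α := ℝ) n]
    have h2 : Filter.Tendsto (fun n : ℕ => (4:ℝ) / ((n : ℝ) * ((n : ℝ) + 2)))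
        Filter.atTop (nhds 0) := Filter.Tendsto.div_atTop tendsto_const_nhds h1
    simpa using (tendsto_const_nhds (x := (4:ℝ))).sub h2
  · have hsum : Summable (fun n : ℕ => (16:ℝ) * (1 / ((n : ℝ) + 1) ^ 2)) := by
      apply Summable.mul_left
      have := (Real.summable_one_div_nat_pow (p := 2)).mpr (by norm_num)
      have := (summable_nat_add_iff 1).mpr this
      refine this.congr fun n => ?_
      push_cast
      ring
    refine Summable.of_nonneg_of_le (fun n => by positivity) (fun n => ?_) hsum
    have hd : deriv (fun h : ℝ => lam h (n + 2)) 1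
        = 4 - 4 / (((n : ℝ) + 2) * ((n : ℝ) + 4)) := by
      have := deriv_lam (n + 2) (by omega)
      rw [this]; push_cast; ring_nf
    rw [hd]
    have hx : (0:ℝ) < ((n : ℝ) + 2) * ((n : ℝ) + 4) := by positivity
    have hsq : ((n:ℝ) + 1)^2 ≤ (((n : ℝ) + 2) * ((n : ℝ) + 4))^2 := by
      nlinarith [Nat.cast_nonneg (α := ℝ) n]
    have : (4 - 4 / (((n : ℝ) + 2) * ((n : ℝ) + 4)) - 4) ^ 2
        = 16 / (((n : ℝ) + 2) * ((n : ℝ) + 4)) ^ 2 := by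
      rw [sub_sub_cancel_left, neg_pow, div_pow]; norm_num
    rw [this]
    rw [mul_one_div]
    exact div_le_div_of_nonneg_left (by norm_num) (by positivity) hsq

end
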